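/- For a non-circular precessing conic family, the derivative of γ = tan(θ − ω) with respect to z = y/x (holding the family parameters fixed, i.e. treating γ as a function of θ via z = tan θ) equals cos²θ cos ω / cos(θ − ω) · (1 + e(1 − b²) cos θ') / (cos θ (1 + e cos θ') + e b sin θ sin θ'), wherever all denominators are nonzero. -/

import Mathlib

open Real

/-- for the precessing conic family, with z = tan θ and
γ(z) = tan(θ(z) − ω(θ(z))), the derivative dγ/dz equals
cos²θ cos ω/cos(θ−ω) · (1 + e(1−b²)cos θ')/(cos θ(1 + e cos θ') + eb sin θ sin θ'),
wherever all denominators are nonzero. -/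
theorem stmt7 (e b θ₀ : ℝ) (he : e ≠ 0) :
    let ω : ℝ → ℝ := fun θ =>
      Real.arctan (b * e * Real.sin (b * (θ - θ₀)) / (1 + e * Real.cos (b * (θ - θ₀))))
    let γ : ℝ → ℝ := fun z => Real.tan (Real.arctan z - ω (Real.arctan z))
    ∀ z : ℝ,
      let θ := Real.arctan z
      let θ' := b * (θ - θ₀)
      0 < 1 + e * Real.cos θ' →
      Real.cos (θ - ω θ) ≠ 0 →
      Real.cos θ * (1 + e * Real.cos θ') + e * b * Real.sin θ * Real.sin θ' ≠ 0 →
      deriv γ z =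
        Real.cos θ ^ 2 * Real.cos (ω θ) / Real.cos (θ - ω θ) *
          ((1 + e * (1 - b ^ 2) * Real.cos θ') /
            (Real.cos θ * (1 + e * Real.cos θ') + e * b * Real.sin θ * Real.sin θ')) := by
  intro ω γ z θ θ' hv0 hK0 hD0
  have hvne : (1 : ℝ) + e * Real.cos θ' ≠ 0 := ne_of_gt hv0
  -- derivative of the inner linear map
  have h1 : HasDerivAt (fun t : ℝ => b * (t - θ₀)) b θ := by
    simpa using ((hasDerivAt_id θ).sub_const θ₀).const_mul b
  have hu : HasDerivAt (fun t : ℝ => b * e * Real.sin (b * (t - θ₀)))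
      (b * e * (Real.cos θ' * b)) θ :=
    ((Real.hasDerivAt_sin θ').comp θ h1).const_mul (b * e)
  have hvd : HasDerivAt (fun t : ℝ => 1 + e * Real.cos (b * (t - θ₀)))
      (e * (-Real.sin θ' * b)) θ :=
    by have hcos := (Real.hasDerivAt_cos θ').comp θ h1
       exact (hcos.const_mul e).const_add 1
  have hq := hu.div hvd hvne
  have hω := hq.arctan
  have hf : HasDerivAt (fun t : ℝ => t - ω t)
      (1 - 1 / (1 + (b * e * Real.sin θ' / (1 + e * Real.cos θ')) ^ 2) *
        ((b * e * (Real.cos θ' * b) * (1 + e * Real.cos θ') -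
          b * e * Real.sin θ' * (e * (-Real.sin θ' * b))) /
          (1 + e * Real.cos θ') ^ 2)) θ := (hasDerivAt_id θ).sub hω
  have htan : HasDerivAt Real.tan (1 / Real.cos (θ - ω θ) ^ 2) (θ - ω θ) :=
    Real.hasDerivAt_tan hK0
  have hγθ := htan.comp θ hf
  have hz : HasDerivAt Real.arctan (1 / (1 + z ^ 2)) z := Real.hasDerivAt_arctan z
  have hγ : HasDerivAt γ
      (1 / Real.cos (θ - ω θ) ^ 2 *
        (1 - 1 / (1 + (b * e * Real.sin θ' / (1 + e * Real.cos θ')) ^ 2) *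
          ((b * e * (Real.cos θ' * b) * (1 + e * Real.cos θ') -
            b * e * Real.sin θ' * (e * (-Real.sin θ' * b))) /
            (1 + e * Real.cos θ') ^ 2)) * (1 / (1 + z ^ 2))) z := by
    have := hγθ.comp z hz; exact this
  rw [hγ.deriv]
  -- abbreviations
  set c := Real.cos θ with hc
  set s := Real.sin θ with hs
  set cp := Real.cos θ' with hcp
  set sp := Real.sin θ' with hsp
  set cω := Real.cos (ω θ) with hcw
  set sω := Real.sin (ω θ) with hsw
  set K := Real.cos (θ - ω θ) with hKdef
  set U := b * e * sp with hU
  set V := 1 + e * cp with hV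
  set D := c * V + e * b * s * sp with hD
  have hK : K = c * cω + s * sω := Real.cos_sub θ (ω θ)
  have hc2 : c ^ 2 = 1 / (1 + z ^ 2) := Real.cos_sq_arctan z
  have hcω0 : 0 < cω := Real.cos_arctan_pos _
  have htanω : sω / cω = U / V := by
    rw [← Real.tan_eq_sin_div_cos]; exact Real.tan_arctan _
  have hsv : sω * V = U * cω := by
    field_simp at htanω
    linarith
  have hp1 : sp ^ 2 + cp ^ 2 = 1 := Real.sin_sq_add_cos_sq θ'
  have hpω : sω ^ 2 + cω ^ 2 = 1 := Real.sin_sq_add_cos_sq (ω θ)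
  have hVU : (0:ℝ) < V ^ 2 + U ^ 2 := by nlinarith [sq_nonneg U]
  have hKV : K * V = D * cω := by
    rw [hK]; linear_combination s * hsv
  have h3 : (sω * V) ^ 2 = (U * cω) ^ 2 := by rw [hsv]
  have hcω2 : cω ^ 2 * (V ^ 2 + U ^ 2) = V ^ 2 := by
    linear_combination (-1) * h3 + V ^ 2 * hpω
  have hvD : V * D = cω * (K * (V ^ 2 + U ^ 2)) := by
    apply mul_left_cancel₀ (ne_of_gt hcω0)
    linear_combination (-V) * hKV - K * hcω2
  have hω' : 1 - 1 / (1 + (U / V) ^ 2) *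
      ((b * e * (cp * b) * V - U * (e * (-sp * b))) / V ^ 2) =
      V * (1 + e * (1 - b ^ 2) * cp) / (V ^ 2 + U ^ 2) := by
    have hVne : V ≠ 0 := hvne
    rw [div_pow, eq_div_iff (ne_of_gt hVU)]
    field_simp
    rw [hV, hU]
    ring
  rw [hω', ← hc2]
  have hKne : K ^ 2 * (V ^ 2 + U ^ 2) ≠ 0 := by
    exact mul_ne_zero (pow_ne_zero 2 hK0) (ne_of_gt hVU)
  have key : V / (K ^ 2 * (V ^ 2 + U ^ 2)) = cω / (K * D) := by
    rw [div_eq_div_iff hKne (mul_ne_zero hK0 hD0)]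
    linear_combination K * hvD
  rw [show 1 / K ^ 2 * (V * (1 + e * (1 - b ^ 2) * cp) / (V ^ 2 + U ^ 2)) * c ^ 2 =
      c ^ 2 * (1 + e * (1 - b ^ 2) * cp) * (V / (K ^ 2 * (V ^ 2 + U ^ 2))) by rw [div_mul_eq_div_div]; ring, key]
  ring
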